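/- The Bell polynomials B_n(q) = ∑_{k=0}^{n} S(n,k) q^k form a q-log-convex sequence: for every n ≥ 1, the polynomial B_{n-1}(q) B_{n+1}(q) − B_n(q)² has nonnegative coefficients. -/

import Mathlib

/-- Stirling numbers of the second kind. -/
def stirling2 : ℕ → ℕ → ℕ
  | 0, 0 => 1
  | 0, _ + 1 => 0
  | _ + 1, 0 => 0
  | n + 1, k + 1 => (k + 1) * stirling2 n (k + 1) + stirling2 n k

/-- The Bell polynomial `B_n(q) = ∑_{k=0}^n S(n,k) q^k`. -/
noncomputable def bellPoly (n : ℕ) : Polynomial ℝ :=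
  ∑ k ∈ Finset.range (n + 1), Polynomial.C (stirling2 n k : ℝ) * Polynomial.X ^ k

lemma s_succ_zero (n : ℕ) : stirling2 (n+1) 0 = 0 := rfl

lemma s_rec (n k : ℕ) : stirling2 (n+1) (k+1) = (k+1) * stirling2 n (k+1) + stirling2 n k := rfl

lemma s_eq_zero : ∀ n k : ℕ, n < k → stirling2 n k = 0 := by
  intro n
  induction n with
  | zero => intro k hk; match k, hk with | (k+1), _ => rfl
  | succ n ih =>
    intro k hk
    match k, hk with
    | (k+1), hk =>
      rw [s_rec, ih (k+1) (by omega), ih k (by omega)]; simp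

lemma s_diag_pos : ∀ n : ℕ, 0 < stirling2 n n := by
  intro n
  induction n with
  | zero => simp [stirling2]
  | succ n ih => rw [s_rec]; exact Nat.add_pos_right _ ih

lemma s_pos : ∀ n k : ℕ, 1 ≤ k → k ≤ n → 0 < stirling2 n k := by
  intro n
  induction n with
  | zero => intro k h1 h2; omega
  | succ n ih =>
    intro k h1 h2
    match k, h1 with
    | (k+1), _ =>
      rw [s_rec]
      rcases Nat.lt_or_ge k 1 with h | h
      · have hk0 : k = 0 := by omega
        subst hk0
        rcases Nat.eq_zero_or_pos n with h0 | h0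
        · subst h0; simp [stirling2]
        · exact Nat.add_pos_left (Nat.mul_pos one_pos (ih 1 le_rfl h0)) _
      · rcases Nat.lt_or_ge k n with h3 | h3
        · exact Nat.add_pos_left (Nat.mul_pos (by omega) (ih (k+1) (by omega) (by omega))) _
        · have : k = n := by omega
          subst this
          exact Nat.add_pos_right _ (s_diag_pos _)

/-- Ratio monotonicity (log-concavity with no internal zeros) of the rows of the
Stirling triangle. -/
lemma lemA : ∀ n a b : ℕ, a ≤ b →
    stirling2 n (b+1) * stirling2 n a ≤ stirling2 n (a+1) * stirling2 n b := by
  intro n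
  induction n with
  | zero =>
    intro a b hab
    rw [s_eq_zero 0 (b+1) (by omega)]
    simp
  | succ n ih =>
    -- two-step version for row n
    have ih2 : ∀ a b : ℕ, a ≤ b →
        stirling2 n (b+2) * stirling2 n a ≤ stirling2 n (a+2) * stirling2 n b := by
      intro a b hab
      by_cases ha1 : n < a + 1
      · rw [s_eq_zero n (b+2) (by omega)]; simp
      · by_cases hb1 : n < b + 1
        · rw [s_eq_zero n (b+2) (by omega)]; simp
        · have hu1 : 0 < stirling2 n (a+1) := s_pos n (a+1) (by omega) (by omega)
          have hv1 : 0 < stirling2 n (b+1) := s_pos n (b+1) (by omega) (by omega)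
          have h1 := ih a b hab
          have h2 := ih (a+1) (b+1) (by omega)
          have key : (stirling2 n (b+2) * stirling2 n a) * (stirling2 n (a+1) * stirling2 n (b+1))
              ≤ (stirling2 n (a+2) * stirling2 n b) * (stirling2 n (a+1) * stirling2 n (b+1)) := by
            calc (stirling2 n (b+2) * stirling2 n a) * (stirling2 n (a+1) * stirling2 n (b+1))
                = (stirling2 n (b+2) * stirling2 n (a+1)) * (stirling2 n (b+1) * stirling2 n a) := by
                  ring
              _ ≤ (stirling2 n (a+2) * stirling2 n (b+1)) * (stirling2 n (a+1) * stirling2 n b) :=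
                  Nat.mul_le_mul h2 h1
              _ = (stirling2 n (a+2) * stirling2 n b) * (stirling2 n (a+1) * stirling2 n (b+1)) := by
                  ring
          exact Nat.le_of_mul_le_mul_right key (Nat.mul_pos hu1 hv1)
    intro a b hab
    rcases a with _ | a
    · rw [s_succ_zero]; simp
    · rcases b with _ | b
      · omega
      · have hab' : a ≤ b := by omega
        rw [s_rec n (b+1), s_rec n a, s_rec n (a+1), s_rec n b]
        have h1 := ih (a+1) (b+1) (by omega)
        have h2 := ih2 a b hab'
        have h3 := ih a b hab'
        have h4 := ih a (b+1) (by omega)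
        obtain ⟨d, rfl⟩ : ∃ d, b = a + d := ⟨b - a, by omega⟩
        nlinarith [Nat.mul_le_mul_left ((a+1)*(a+d+2)) h1,
          Nat.mul_le_mul_left (a+2) h2,
          Nat.mul_le_mul_left d h4, h3,
          Nat.zero_le (d * (stirling2 n (a+2) * stirling2 n (a+d+1)))]

/-- TP₂ property of two consecutive rows of the Stirling triangle. -/
lemma lemD : ∀ n k j : ℕ, k ≤ j →
    stirling2 n j * stirling2 (n+1) k ≤ stirling2 n k * stirling2 (n+1) j := by
  intro n k j hkj
  rcases k with _ | k
  · rw [s_succ_zero]; simp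
  · rcases j with _ | j
    · omega
    · rw [s_rec n k, s_rec n j]
      have h := lemA n k j (by omega)
      obtain ⟨d, rfl⟩ : ∃ d, j = k + d := ⟨j - k, by omega⟩
      nlinarith [h, Nat.zero_le (d * (stirling2 n (k+1) * stirling2 n (k+d+1)))]

lemma coeff_bellPoly (n k : ℕ) : (bellPoly n).coeff k = (stirling2 n k : ℝ) := by
  rw [bellPoly, Polynomial.finset_sum_coeff]
  simp only [Polynomial.coeff_C_mul, Polynomial.coeff_X_pow, mul_ite, mul_one, mul_zero]
  rw [Finset.sum_ite_eq (Finset.range (n+1)) k (fun j => (stirling2 n j : ℝ))]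
  by_cases h : k ∈ Finset.range (n+1)
  · rw [if_pos h]
  · rw [if_neg h, s_eq_zero n k (by simpa using h)]; simp

lemma shift_sum (m : ℕ) (f g : ℕ → ℝ) (hf : f 0 = 0) (hg : g 0 = 0) :
    ∑ x ∈ Finset.HasAntidiagonal.antidiagonal m, f x.1 * g (x.2 - 1)
      = ∑ x ∈ Finset.HasAntidiagonal.antidiagonal m, f (x.1 - 1) * g x.2 := by
  rw [Finset.Nat.sum_antidiagonal_eq_sum_range_succ_mk,
      Finset.Nat.sum_antidiagonal_eq_sum_range_succ_mk]
  rw [Finset.sum_range_succ, Finset.sum_range_succ']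
  simp only [Nat.sub_self, hg, mul_zero, hf, zero_mul, add_zero, zero_add]
  apply Finset.sum_congr rfl
  intro i _
  congr 2

lemma term_id (n k j : ℕ) (hn : stirling2 n 0 = 0) :
    (stirling2 n k : ℝ) * stirling2 (n+2) j - stirling2 (n+1) k * stirling2 (n+1) j
      = ((j:ℝ) - k) * (stirling2 n k * stirling2 (n+1) j)
        + ((stirling2 n k : ℝ) * stirling2 (n+1) (j-1)
            - (stirling2 n (k-1) : ℝ) * stirling2 (n+1) j) := by
  rcases j with _ | j <;> rcases k with _ | k <;>
    simp only [Nat.zero_sub, Nat.succ_sub_one, s_succ_zero, s_rec, hn] <;>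
    push_cast <;> ring

lemma key_sum (n m : ℕ) (hn : stirling2 n 0 = 0) :
    ∑ x ∈ Finset.HasAntidiagonal.antidiagonal m,
        ((stirling2 n x.1 : ℝ) * stirling2 (n+2) x.2
          - (stirling2 (n+1) x.1 : ℝ) * stirling2 (n+1) x.2)
      = ∑ x ∈ Finset.HasAntidiagonal.antidiagonal m,
          ((x.2:ℝ) - x.1) * (stirling2 n x.1 * stirling2 (n+1) x.2) := by
  have h1 : ∀ x ∈ Finset.HasAntidiagonal.antidiagonal m,
      (stirling2 n x.1 : ℝ) * stirling2 (n+2) x.2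
        - (stirling2 (n+1) x.1 : ℝ) * stirling2 (n+1) x.2
      = ((x.2:ℝ) - x.1) * (stirling2 n x.1 * stirling2 (n+1) x.2)
        + ((stirling2 n x.1 : ℝ) * stirling2 (n+1) (x.2-1)
            - (stirling2 n (x.1-1) : ℝ) * stirling2 (n+1) x.2) :=
    fun x _ => term_id n x.1 x.2 hn
  rw [Finset.sum_congr rfl h1, Finset.sum_add_distrib, Finset.sum_sub_distrib,
    shift_sum m (fun k => (stirling2 n k : ℝ)) (fun j => (stirling2 (n+1) j : ℝ))
      (by simp [hn]) (by simp [s_succ_zero])]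
  simp

lemma wron_nonneg (n m : ℕ) :
    0 ≤ ∑ x ∈ Finset.HasAntidiagonal.antidiagonal m,
        ((x.2:ℝ) - x.1) * (stirling2 n x.1 * stirling2 (n+1) x.2) := by
  set F : ℕ × ℕ → ℝ := fun x => ((x.2:ℝ) - x.1) * (stirling2 n x.1 * stirling2 (n+1) x.2) with hF
  have hswap : ∑ x ∈ Finset.HasAntidiagonal.antidiagonal m, F x.swap = ∑ x ∈ Finset.HasAntidiagonal.antidiagonal m, F x :=
    Finset.Nat.sum_antidiagonal_swap
  have h2 : 0 ≤ ∑ x ∈ Finset.HasAntidiagonal.antidiagonal m, (F x + F x.swap) := by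
    apply Finset.sum_nonneg
    intro x _
    obtain ⟨k, j⟩ := x
    simp only [hF, Prod.swap_prod_mk]
    have key : ((j:ℝ) - k) * (stirling2 n k * stirling2 (n+1) j)
        + ((k:ℝ) - j) * (stirling2 n j * stirling2 (n+1) k)
        = ((j:ℝ) - k) * ((stirling2 n k : ℝ) * stirling2 (n+1) j
            - (stirling2 n j : ℝ) * stirling2 (n+1) k) := by ring
    rw [key]
    rcases le_total k j with h | h
    · apply mul_nonneg
      · simp only [sub_nonneg]; exact_mod_cast Nat.cast_le.mpr h
      · have := lemD n k j h
        have : ((stirling2 n j : ℝ) * stirling2 (n+1) k)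
            ≤ (stirling2 n k : ℝ) * stirling2 (n+1) j := by exact_mod_cast this
        linarith
    · have h1 : ((j:ℝ) - k) ≤ 0 := by
        simp only [sub_nonpos]; exact_mod_cast Nat.cast_le.mpr h
      have h2' := lemD n j k h
      have h2 : ((stirling2 n k : ℝ) * stirling2 (n+1) j)
          ≤ (stirling2 n j : ℝ) * stirling2 (n+1) k := by exact_mod_cast h2'
      nlinarith
  rw [Finset.sum_add_distrib, hswap] at h2
  linarith

theorem qLogConvex_bellPoly :
    ∀ n : ℕ, ∀ m : ℕ,
      0 ≤ (bellPoly n * bellPoly (n + 2) - (bellPoly (n + 1)) ^ 2).coeff m := by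
  intro n m
  rcases n with _ | n
  · -- n = 0 : B₀ = 1, B₁ = X, B₂ = X + X², difference is X
    have e0 : bellPoly 0 = 1 := by
      simp [bellPoly, stirling2]
    have e1 : bellPoly 1 = Polynomial.X := by
      norm_num [bellPoly, Finset.sum_range_succ, stirling2]
    have e2 : bellPoly 2 = Polynomial.X + Polynomial.X ^ 2 := by
      have v0 : stirling2 2 0 = 0 := rfl
      have v1 : stirling2 2 1 = 1 := rfl
      have v2 : stirling2 2 2 = 1 := rfl
      norm_num [bellPoly, Finset.sum_range_succ, v0, v1, v2]
    have hX : bellPoly 0 * bellPoly (0 + 2) - (bellPoly (0 + 1)) ^ 2 = Polynomial.X := by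
      rw [e0, e1, e2]; ring
    rw [hX, Polynomial.coeff_X]
    split <;> norm_num
  · rw [Polynomial.coeff_sub, sq, Polynomial.coeff_mul, Polynomial.coeff_mul,
      ← Finset.sum_sub_distrib]
    simp only [coeff_bellPoly]
    rw [key_sum (n+1) m (s_succ_zero n)]
    exact wron_nonneg (n+1) m
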